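/- Let α_1,…,α_n be pairwise distinct elements of a finite field F_q and let k, r be integers with 6 ≤ 2k ≤ n and 1 ≤ r ≤ k−1. Assume that σ_r(α_{i_1},…,α_{i_k}) ≠ 0 for every k-element subset of {1,…,n} and σ_{r−1}(α_{i_1},…,α_{i_{k−1}}) ≠ 0 for every (k−1)-element subset of {1,…,n} (so that both C_{r,k} and C_1 are MDS). Let w ∈ F_q^n be the vector with w_i = ∏_{1≤j≤k+1, j≠i}(α_i − α_j)^{-1} for 1 ≤ i ≤ k+1 and w_i = 0 for k+2 ≤ i ≤ n. Then the covering radius of the dual code C_{r,k}^⊥ equals k, and w is a deep hole of C_{r,k}^⊥. -/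

import Mathlib

open Finset Matrix

/-- Elementary symmetric polynomial `σ_t` evaluated at the values `x 0, …, x (m-1)`. -/
def esymmV {F : Type*} [CommRing F] {m : ℕ} (t : ℕ) (x : Fin m → F) : F :=
  ∑ A ∈ Finset.univ.powersetCard t, ∏ i ∈ A, x i

/-- Complete homogeneous symmetric polynomial `S_t` evaluated at `x 0, …, x (m-1)`. -/
def hsymmV {F : Type*} [CommRing F] {m : ℕ} (t : ℕ) (x : Fin m → F) : F :=
  ∑ d ∈ Finset.Nat.antidiagonalTuple m t, ∏ i, x i ^ d i

/-- The exponent of the `i`-th row (0-indexed): the elements of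
`{0,…,k−r−1} ∪ {k−r+1,…,k}` in increasing order. -/
def expo (k r : ℕ) (i : Fin k) : ℕ := if (i : ℕ) < k - r then (i : ℕ) else (i : ℕ) + 1

/-- The Vandermonde product `∏_{i<j} (α_j − α_i)`. -/
def vand {F : Type*} [CommRing F] {n : ℕ} (α : Fin n → F) : F :=
  ∏ i : Fin n, ∏ j ∈ Finset.Ioi i, (α j - α i)

/-- The matrix `G_{r,k}`: rows are `(α_1^e, …, α_n^e)` for
`e ∈ {0,…,k−r−1} ∪ {k−r+1,…,k}` in increasing order. -/
def Grk {F : Type*} [Field F] {n : ℕ} (α : Fin n → F) (k r : ℕ) : Matrix (Fin k) (Fin n) F :=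
  Matrix.of fun i j => α j ^ expo k r i

/-- The matrix `G_1`: `G_{r,k}` with the extra column `(0,…,0,1)ᵀ` appended. -/
def G1 {F : Type*} [Field F] {n : ℕ} (α : Fin n → F) (k r : ℕ) :
    Matrix (Fin k) (Fin (n + 1)) F :=
  Matrix.of fun i j =>
    if hj : (j : ℕ) < n then α ⟨j, hj⟩ ^ expo k r i
    else if (i : ℕ) = k - 1 then 1 else 0

/-- The matrix `G_2`: `G_1` with the extra column `(0,…,0,1,δ)ᵀ` appended
(entry `1` in row `k−1`, i.e. index `k−2`, and `δ` in row `k`, i.e. index `k−1`). -/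
def G2 {F : Type*} [Field F] {n : ℕ} (α : Fin n → F) (k r : ℕ) (δ : F) :
    Matrix (Fin k) (Fin (n + 2)) F :=
  Matrix.of fun i j =>
    if hj : (j : ℕ) < n then α ⟨j, hj⟩ ^ expo k r i
    else if (j : ℕ) = n then (if (i : ℕ) = k - 1 then 1 else 0)
    else (if (i : ℕ) = k - 2 then 1 else if (i : ℕ) = k - 1 then δ else 0)

/-- `u_i = ∏_{j ≠ i} (α_i − α_j)⁻¹`. -/
def uCoef {F : Type*} [Field F] {n : ℕ} (α : Fin n → F) (i : Fin n) : F :=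
  ∏ j ∈ Finset.univ.erase i, (α i - α j)⁻¹

/-- `Λ_{r,i} = ∑_{j=0}^{r} (−1)^j σ_j α_i^{(n−k)+(r−1)−j}`. -/
def Lam {F : Type*} [Field F] {n : ℕ} (α : Fin n → F) (k r : ℕ) (i : Fin n) : F :=
  ∑ j ∈ Finset.range (r + 1), (-1 : F) ^ j * esymmV j α * α i ^ ((n - k) + (r - 1) - j)

/-- Every `k×k` submatrix of `G` is nonsingular. -/
def allSubNonsing {F : Type*} [Field F] {k m : ℕ} (G : Matrix (Fin k) (Fin m) F) : Prop :=
  ∀ c : Fin k → Fin m, Function.Injective c → (G.submatrix id c).det ≠ 0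

/-- The linear code spanned by the rows of `G`. -/
def rowSpan {F : Type*} [Field F] {k m : ℕ} (G : Matrix (Fin k) (Fin m) F) :
    Submodule F (Fin m → F) :=
  Submodule.span F (Set.range fun i => G i)

/-- The dual code `C^⊥ = {x : ∑ x_i c_i = 0 for all c ∈ C}`, as a set. -/
def dualSet {F : Type*} [Field F] {m : ℕ} (C : Set (Fin m → F)) : Set (Fin m → F) :=
  {x | ∀ c ∈ C, ∑ i, x i * c i = 0}

/-- The extended code of `C` with respect to `w`. -/
def extCode {F : Type*} [Field F] {m : ℕ} (C : Set (Fin m → F)) (w : Fin m → F) :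
    Set (Fin (m + 1) → F) :=
  {y | ∃ c ∈ C, (∀ i : Fin m, y (Fin.castSucc i) = c i) ∧ y (Fin.last m) = ∑ i, w i * c i}

/-- The Hamming distance from `x` to the code `C`. -/
noncomputable def distTo {F : Type*} [Field F] [DecidableEq F] {m : ℕ}
    (C : Set (Fin m → F)) (x : Fin m → F) : ℕ :=
  sInf {d | ∃ c ∈ C, hammingDist x c = d}

/-- The covering radius of the code `C`. -/
noncomputable def covRad {F : Type*} [Field F] [DecidableEq F] {m : ℕ}
    (C : Set (Fin m → F)) : ℕ :=
  sSup (Set.range (distTo C))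


open Polynomial in
lemma nodal_coeff' {F : Type*} [Field F] {m : ℕ} (β : Fin m → F) {e : ℕ} (he : e ≤ m) :
    (Lagrange.nodal Finset.univ β).coeff e = (-1) ^ (m - e) * esymmV (m - e) β := by
  rw [Lagrange.nodal_eq, Finset.prod_eq_multiset_prod]
  have : Multiset.map (fun i => X - C (β i)) Finset.univ.val
      = Multiset.map (fun t => X - C t) (Finset.univ.val.map β) := by
    rw [Multiset.map_map]; rfl
  rw [this, Multiset.prod_X_sub_C_coeff]
  · rw [esymmV, ← Finset.esymm_map_val]; simp
  · simpa using he

open Polynomial in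
lemma key_lemma' {F : Type*} [Field F] {m : ℕ} (β : Fin m → F) (hβ : Function.Injective β)
    {a : ℕ} (ha : a ≤ m) (hσ : esymmV (m - a) β ≠ 0)
    (c : Fin m → F) (hc : ∀ e, e ≤ m → e ≠ a → ∑ i, c i * β i ^ e = 0) : c = 0 := by
  set p := Lagrange.nodal (Finset.univ : Finset (Fin m)) β with hp
  have hdeg : p.natDegree = m := by rw [hp, Lagrange.natDegree_nodal]; simp
  have heval : ∀ i, p.eval (β i) = 0 := fun i =>
    Lagrange.eval_nodal_at_node (Finset.mem_univ i)
  have hsum : ∑ e ∈ Finset.range (m + 1), p.coeff e * (∑ i, c i * β i ^ e) = 0 := by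
    have h1 : ∀ i, ∑ e ∈ Finset.range (m + 1), p.coeff e * β i ^ e = 0 := by
      intro i
      rw [← Polynomial.eval_eq_sum_range' (by omega : p.natDegree < m + 1), heval]
    calc ∑ e ∈ Finset.range (m + 1), p.coeff e * (∑ i, c i * β i ^ e)
        = ∑ e ∈ Finset.range (m + 1), ∑ i, c i * (p.coeff e * β i ^ e) := by
          refine Finset.sum_congr rfl fun e _ => ?_
          rw [Finset.mul_sum]
          refine Finset.sum_congr rfl fun i _ => by ring
      _ = ∑ i, c i * (∑ e ∈ Finset.range (m + 1), p.coeff e * β i ^ e) := by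
          rw [Finset.sum_comm]
          exact Finset.sum_congr rfl fun i _ => by rw [Finset.mul_sum]
      _ = 0 := by simp [h1]
  have hLa : ∑ i, c i * β i ^ a = 0 := by
    rw [Finset.sum_eq_single a] at hsum
    · have hca : p.coeff a ≠ 0 := by
        rw [nodal_coeff' β ha]
        exact mul_ne_zero (pow_ne_zero _ (by norm_num)) hσ
      exact (mul_eq_zero.mp hsum).resolve_left hca
    · intro e hee hne
      rw [hc e (Nat.lt_succ_iff.mp (Finset.mem_range.mp hee)) hne, mul_zero]
    · intro h; exact absurd (Finset.mem_range.mpr (by omega)) h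
  have hL : ∀ e, e ≤ m → ∑ i, c i * β i ^ e = 0 := by
    intro e hem
    by_cases h : e = a
    · subst h; exact hLa
    · exact hc e hem h
  by_contra hc0
  have hdet : ((Matrix.vandermonde β)ᵀ).det = 0 := by
    rw [← Matrix.exists_mulVec_eq_zero_iff]
    refine ⟨c, hc0, ?_⟩
    funext e
    have h2 := hL (e : ℕ) (Nat.le_of_lt_succ (by omega : (e : ℕ) < m + 1))
    simpa [Matrix.mulVec, dotProduct, Matrix.vandermonde, mul_comm] using h2
  rw [Matrix.det_transpose, Matrix.det_vandermonde] at hdet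
  obtain ⟨i, -, hi⟩ := Finset.prod_eq_zero_iff.mp hdet
  obtain ⟨j, hj, h0⟩ := Finset.prod_eq_zero_iff.mp hi
  exact absurd (hβ (sub_eq_zero.mp h0)) (Finset.mem_Ioi.mp hj).ne'

open Polynomial in
lemma coeff_basis_top' {F : Type*} [Field F] {m : ℕ} (β : Fin (m + 1) → F)
    (hβ : Function.Injective β) (i : Fin (m + 1)) :
    (Lagrange.basis Finset.univ β i).coeff m = Lagrange.nodalWeight Finset.univ β i := by
  have h1 : Lagrange.basis Finset.univ β i
      = C (Lagrange.nodalWeight Finset.univ β i) * Lagrange.nodal (Finset.univ.erase i) β := by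
    rw [Lagrange.basis_eq_prod_sub_inv_mul_nodal_div (Finset.mem_univ i),
      ← Lagrange.nodal_erase_eq_nodal_div (Finset.mem_univ i)]
  rw [h1, Polynomial.coeff_C_mul]
  have hmon := Lagrange.nodal_monic (s := Finset.univ.erase i) (v := β)
  have hdeg : (Lagrange.nodal (Finset.univ.erase i) β).natDegree = m := by
    rw [Lagrange.natDegree_nodal, Finset.card_erase_of_mem (Finset.mem_univ i)]
    simp
  have h2 := hmon.coeff_natDegree
  rw [hdeg] at h2
  rw [h2, mul_one]

open Polynomial in
lemma lagrange_weight_sum' {F : Type*} [Field F] {m : ℕ} (β : Fin (m + 1) → F)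
    (hβ : Function.Injective β) {e : ℕ} (he : e ≤ m) :
    ∑ i, β i ^ e * Lagrange.nodalWeight Finset.univ β i = if e = m then 1 else 0 := by
  have hinj : Set.InjOn β (Finset.univ : Finset (Fin (m+1))) := fun a _ b _ h => hβ h
  have hdeg : (X ^ e : F[X]).degree < (Finset.univ : Finset (Fin (m+1))).card := by
    rw [Polynomial.degree_X_pow]
    simp only [Finset.card_univ, Fintype.card_fin]
    exact_mod_cast Nat.lt_succ_of_le he
  have h := Lagrange.eq_interpolate (f := (X ^ e : F[X])) hinj hdeg
  have h2 := congrArg (fun p => Polynomial.coeff p m) h.symm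
  rw [Polynomial.coeff_X_pow] at h2
  rw [Lagrange.interpolate_apply, Polynomial.finset_sum_coeff] at h2
  have h3 : ∀ i : Fin (m+1), (C ((X:F[X]) ^ e |>.eval (β i)) * Lagrange.basis Finset.univ β i).coeff m
      = β i ^ e * Lagrange.nodalWeight Finset.univ β i := by
    intro i
    rw [Polynomial.coeff_C_mul, coeff_basis_top' β hβ, Polynomial.eval_pow, Polynomial.eval_X]
  rw [Finset.sum_congr rfl (fun i _ => h3 i)] at h2
  rw [h2]
  simp [eq_comm]

lemma mem_dual_iff' {F : Type*} [Field F] {k m : ℕ} (G : Matrix (Fin k) (Fin m) F)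
    (x : Fin m → F) :
    x ∈ dualSet (rowSpan G : Set (Fin m → F)) ↔ ∀ i, ∑ j, x j * G i j = 0 := by
  constructor
  · intro hx i
    exact hx (G i) (Submodule.subset_span ⟨i, rfl⟩)
  · intro hx c hc
    induction hc using Submodule.span_induction with
    | mem c hmem => obtain ⟨i, rfl⟩ := hmem; exact hx i
    | zero => simp
    | add c d _ _ hc hd => simp only [Pi.add_apply, mul_add, Finset.sum_add_distrib, hc, hd, add_zero]
    | smul a c _ hc =>
        simp only [Pi.smul_apply, smul_eq_mul]
        calc ∑ i, x i * (a * c i) = a * ∑ i, x i * c i := by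
              rw [Finset.mul_sum]; exact Finset.sum_congr rfl fun i _ => by ring
          _ = 0 := by rw [hc, mul_zero]

lemma sum_restrict' {F : Type*} [Field F] {n m : ℕ} (hmn : m ≤ n) (f : Fin n → F)
    (hf : ∀ j : Fin n, ¬ (j : ℕ) < m → f j = 0) (g : Fin n → F) :
    ∑ j, f j * g j = ∑ i : Fin m, f (Fin.castLE hmn i) * g (Fin.castLE hmn i) := by
  have hinj : Function.Injective (Fin.castLE hmn) := Fin.castLE_injective hmn
  rw [← Finset.sum_image (f := fun j => f j * g j)
    (g := Fin.castLE hmn) (s := Finset.univ) (fun a _ b _ h => hinj h)]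
  refine (Finset.sum_subset (Finset.subset_univ _) ?_).symm
  intro j _ hj
  have : ¬ (j : ℕ) < m := by
    intro h
    exact hj (Finset.mem_image.mpr ⟨⟨j, h⟩, Finset.mem_univ _, by ext; simp⟩)
  rw [hf j this, zero_mul]

lemma expo_cover' {k r : ℕ} (hr : 1 ≤ r) (hrk : r ≤ k - 1) (hk : 3 ≤ k) {e : ℕ}
    (he : e ≤ k) (hne : e ≠ k - r) : ∃ i : Fin k, expo k r i = e := by
  by_cases h : e < k - r
  · exact ⟨⟨e, by omega⟩, by simp [expo, h]⟩
  · refine ⟨⟨e - 1, by omega⟩, ?_⟩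
    unfold expo
    rw [if_neg (by simp only [Fin.val_mk]; omega)]
    simp only [Fin.val_mk]; omega

lemma cols_det_ne_zero' {F : Type*} [Field F] {n k r : ℕ} (α : Fin n → F)
    (hα : Function.Injective α) (hr : 1 ≤ r) (hrk : r ≤ k - 1) (hk : 3 ≤ k)
    (c : Fin k → Fin n) (hc : Function.Injective c) (hσ : esymmV r (α ∘ c) ≠ 0) :
    (Matrix.of fun i j : Fin k => α (c j) ^ expo k r i).det ≠ 0 := by
  intro hdet
  obtain ⟨v, hv0, hv⟩ := (Matrix.exists_mulVec_eq_zero_iff).mpr hdet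
  refine hv0 (key_lemma' (α ∘ c) (hα.comp hc) (a := k - r) (by omega) ?_ v ?_)
  · have hkr : k - (k - r) = r := by omega
    rw [hkr]; exact hσ
  · intro e he hne
    obtain ⟨i, hi⟩ := expo_cover' hr hrk hk he hne
    have h2 := congrFun hv i
    simp only [Matrix.mulVec, dotProduct, Matrix.of_apply, Pi.zero_apply] at h2
    rw [← h2, ← hi]
    exact Finset.sum_congr rfl fun j _ => by rw [mul_comm]; rfl

lemma exists_close' {F : Type*} [Field F] [DecidableEq F] {n k r : ℕ} (α : Fin n → F)
    (hα : Function.Injective α) (hr : 1 ≤ r) (hrk : r ≤ k - 1) (hk : 3 ≤ k) (hkn : k ≤ n)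
    (hσ : esymmV r (α ∘ Fin.castLE hkn) ≠ 0) (x : Fin n → F) :
    ∃ cv ∈ dualSet (rowSpan (Grk α k r) : Set (Fin n → F)), hammingDist x cv ≤ k := by
  set M : Matrix (Fin k) (Fin k) F :=
    Matrix.of fun i j : Fin k => α (Fin.castLE hkn j) ^ expo k r i with hM
  have hdet : M.det ≠ 0 :=
    cols_det_ne_zero' α hα hr hrk hk (Fin.castLE hkn) (Fin.castLE_injective hkn) hσ
  set s : Fin k → F := fun i => ∑ j, x j * α j ^ expo k r i with hs
  set y' : Fin k → F := M⁻¹ *ᵥ s with hy'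
  have hMy : M *ᵥ y' = s := by
    rw [hy', Matrix.mulVec_mulVec, Matrix.mul_nonsing_inv _ (isUnit_iff_ne_zero.mpr hdet),
      Matrix.one_mulVec]
  set y : Fin n → F := fun j => if h : (j : ℕ) < k then y' ⟨j, h⟩ else 0 with hy
  have hy0 : ∀ j : Fin n, ¬ (j : ℕ) < k → y j = 0 := fun j h => dif_neg h
  have hycast : ∀ i : Fin k, y (Fin.castLE hkn i) = y' i := by
    intro i
    simp only [hy, Fin.coe_castLE, i.isLt, dif_pos, Fin.eta]
  have hysum : ∀ i : Fin k, ∑ j, y j * α j ^ expo k r i = s i := by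
    intro i
    rw [sum_restrict' hkn y hy0 (fun j => α j ^ expo k r i)]
    have := congrFun hMy i
    rw [← this]
    simp only [Matrix.mulVec, dotProduct, hM, Matrix.of_apply]
    exact Finset.sum_congr rfl fun j _ => by rw [hycast, mul_comm]
  refine ⟨x - y, ?_, ?_⟩
  · rw [mem_dual_iff']
    intro i
    have : ∀ j, (x - y) j * Grk α k r i j = x j * α j ^ expo k r i - y j * α j ^ expo k r i := by
      intro j; simp [Grk, sub_mul]
    rw [Finset.sum_congr rfl fun j _ => this j, Finset.sum_sub_distrib, hysum, hs, sub_self]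
  · rw [hammingDist_comm, hammingDist_eq_hammingNorm, show -(x - y) + x = y by abel]
    have hsub : ({j | y j ≠ 0} : Finset (Fin n)) ⊆ Finset.univ.image (Fin.castLE hkn) := by
      intro j hj
      simp only [Finset.mem_filter] at hj
      have hjk : (j : ℕ) < k := by by_contra h; exact hj.2 (hy0 j h)
      exact Finset.mem_image.mpr ⟨⟨j, hjk⟩, Finset.mem_univ _, by ext; simp⟩
    calc hammingNorm y ≤ (Finset.univ.image (Fin.castLE hkn)).card := Finset.card_le_card hsub
      _ ≤ (Finset.univ : Finset (Fin k)).card := Finset.card_image_le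
      _ = k := by simp

lemma w_syndrome' {F : Type*} [Field F] {n k : ℕ} (α : Fin n → F)
    (hα : Function.Injective α) (hkn : k + 1 ≤ n)
    (w : Fin n → F)
    (hw : w = fun i : Fin n =>
      if (i : ℕ) < k + 1 then
        ∏ j ∈ (Finset.univ.filter fun j : Fin n => (j : ℕ) < k + 1).erase i, (α i - α j)⁻¹
      else 0) {e : ℕ} (he : e ≤ k) :
    ∑ j, w j * α j ^ e = if e = k then 1 else 0 := by
  set β : Fin (k + 1) → F := α ∘ Fin.castLE hkn with hβ
  have hβinj : Function.Injective β := hα.comp (Fin.castLE_injective hkn)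
  have hw0 : ∀ j : Fin n, ¬ (j : ℕ) < k + 1 → w j = 0 := by
    intro j h; rw [hw]; exact if_neg h
  have himg : (Finset.univ.filter fun j : Fin n => (j : ℕ) < k + 1)
      = Finset.univ.image (Fin.castLE hkn) := by
    ext j
    simp only [Finset.mem_filter, Finset.mem_univ, true_and, Finset.mem_image]
    constructor
    · intro h
      exact ⟨⟨j, h⟩, by ext; simp⟩
    · rintro ⟨i, rfl⟩
      simpa using i.isLt
  have hwcast : ∀ i : Fin (k + 1), w (Fin.castLE hkn i) = Lagrange.nodalWeight Finset.univ β i := by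
    intro i
    rw [hw]
    simp only [Fin.coe_castLE, i.isLt, if_pos]
    rw [himg, ← Finset.image_erase (Fin.castLE_injective hkn)]
    rw [Finset.prod_image (fun a _ b _ h => Fin.castLE_injective hkn h)]
    rw [Lagrange.nodalWeight]
    rfl
  rw [sum_restrict' hkn w hw0 (fun j => α j ^ e)]
  rw [← lagrange_weight_sum' β hβinj he]
  exact Finset.sum_congr rfl fun i _ => by rw [hwcast, mul_comm]; rfl

lemma w_far' {F : Type*} [Field F] [DecidableEq F] {n k r : ℕ}
    (α : Fin n → F) (hα : Function.Injective α) (hr : 1 ≤ r) (hrk : r ≤ k - 1)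
    (hk : 3 ≤ k) (hkn : k + 1 ≤ n)
    (hstarstar : ∀ c : Fin (k - 1) → Fin n, Function.Injective c → esymmV (r - 1) (α ∘ c) ≠ 0)
    (w : Fin n → F)
    (hw : w = fun i : Fin n =>
      if (i : ℕ) < k + 1 then
        ∏ j ∈ (Finset.univ.filter fun j : Fin n => (j : ℕ) < k + 1).erase i, (α i - α j)⁻¹
      else 0)
    (cv : Fin n → F) (hcv : cv ∈ dualSet (rowSpan (Grk α k r) : Set (Fin n → F))) :
    k ≤ hammingDist w cv := by
  by_contra hlt
  push_neg at hlt
  set y : Fin n → F := w - cv with hy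
  have hnorm : hammingNorm y ≤ k - 1 := by
    rw [hy, ← neg_add_eq_sub, ← hammingDist_eq_hammingNorm, hammingDist_comm]
    omega
  have hcrow := (mem_dual_iff' (Grk α k r) cv).mp hcv
  have hsy : ∀ e, e ≤ k → e ≠ k - r → ∑ j, y j * α j ^ e = if e = k then 1 else 0 := by
    intro e he hne
    obtain ⟨i, hi⟩ := expo_cover' hr hrk hk he hne
    have h1 : ∑ j, cv j * α j ^ e = 0 := by
      have := hcrow i
      simpa [Grk, hi] using this
    have h2 : ∀ j, y j * α j ^ e = w j * α j ^ e - cv j * α j ^ e := by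
      intro j; rw [hy]; simp [sub_mul]
    rw [Finset.sum_congr rfl fun j _ => h2 j, Finset.sum_sub_distrib, h1, sub_zero]
    exact w_syndrome' α hα hkn w hw he
  set T' : Finset (Fin n) := Finset.univ.filter (fun j => y j ≠ 0) with hT'
  have hT'card : T'.card ≤ k - 1 := hnorm
  obtain ⟨T, hT'T, -, hTcard⟩ := Finset.exists_subsuperset_card_eq (Finset.subset_univ T')
    hT'card (by simp; omega)
  set φ : Fin (k - 1) → Fin n := fun i => T.orderEmbOfFin hTcard i with hφ
  have hφinj : Function.Injective φ := fun a b h => (T.orderEmbOfFin hTcard).injective h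
  have hTimg : Finset.univ.image φ = T := by
    apply Finset.eq_of_subset_of_card_le
    · intro j hj
      obtain ⟨i, -, rfl⟩ := Finset.mem_image.mp hj
      exact Finset.orderEmbOfFin_mem T hTcard i
    · rw [hTcard, Finset.card_image_of_injective _ hφinj]; simp
  have hyzero : ∀ j, j ∉ T → y j = 0 := by
    intro j hj
    by_contra hne
    exact hj (hT'T (by simp [hT', hne]))
  have hc' : (fun i => y (φ i)) = 0 := by
    apply key_lemma' (α ∘ φ) (hα.comp hφinj) (a := k - r) (by omega)
    · have : k - 1 - (k - r) = r - 1 := by omega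
      rw [this]
      exact hstarstar φ hφinj
    · intro e he hne
      have hsum : ∑ i, y (φ i) * (α ∘ φ) i ^ e = ∑ j ∈ T, y j * α j ^ e := by
        rw [← hTimg, Finset.sum_image (fun a _ b _ h => hφinj h)]
        rfl
      rw [hsum]
      rw [Finset.sum_subset (Finset.subset_univ T)
        (fun j _ hj => by rw [hyzero j hj, zero_mul])]
      rw [hsy e (by omega) hne]
      rw [if_neg (by omega)]
  have hy0 : y = 0 := by
    funext j
    by_cases hj : j ∈ T
    · obtain ⟨i, -, rfl⟩ := Finset.mem_image.mp (hTimg ▸ hj)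
      exact congrFun hc' i
    · exact hyzero j hj
  have hwc : w = cv := by rwa [hy, sub_eq_zero] at hy0
  obtain ⟨i, hi⟩ := expo_cover' hr hrk hk (le_refl k) (by omega)
  have h1 : ∑ j, cv j * α j ^ k = 0 := by
    have := hcrow i
    simpa [Grk, hi] using this
  rw [← hwc] at h1
  rw [w_syndrome' α hα hkn w hw (le_refl k), if_pos rfl] at h1
  exact one_ne_zero h1

/-- Corollary 4.10: if `C_{r,k}` and `C_1` are MDS, then the covering radius of
`C_{r,k}^⊥` is `k` and the vector `w` from the extension is a deep hole of `C_{r,k}^⊥`. -/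
theorem covRad_dual_Crk {F : Type*} [Field F] [Fintype F] [DecidableEq F] {n : ℕ}
    (α : Fin n → F) (hα : Function.Injective α) (k r : ℕ)
    (h6 : 6 ≤ 2 * k) (hkn : 2 * k ≤ n) (hr1 : 1 ≤ r) (hrk : r ≤ k - 1)
    (hstar : ∀ c : Fin k → Fin n, Function.Injective c → esymmV r (α ∘ c) ≠ 0)
    (hstarstar : ∀ c : Fin (k - 1) → Fin n, Function.Injective c → esymmV (r - 1) (α ∘ c) ≠ 0)
    (w : Fin n → F)
    (hw : w = fun i : Fin n =>
      if (i : ℕ) < k + 1 then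
        ∏ j ∈ (Finset.univ.filter fun j : Fin n => (j : ℕ) < k + 1).erase i, (α i - α j)⁻¹
      else 0) :
    covRad (dualSet (rowSpan (Grk α k r) : Set (Fin n → F))) = k ∧
    distTo (dualSet (rowSpan (Grk α k r) : Set (Fin n → F))) w
      = covRad (dualSet (rowSpan (Grk α k r) : Set (Fin n → F))) := by
  have hk3 : 3 ≤ k := by omega
  have hkn' : k ≤ n := by omega
  have hk1n : k + 1 ≤ n := by omega
  set C : Set (Fin n → F) := dualSet (rowSpan (Grk α k r) : Set (Fin n → F)) with hC
  have hσk : esymmV r (α ∘ Fin.castLE hkn') ≠ 0 := hstar _ (Fin.castLE_injective hkn')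
  have hclose : ∀ x : Fin n → F, ∃ cv ∈ C, hammingDist x cv ≤ k := fun x =>
    exists_close' α hα hr1 hrk hk3 hkn' hσk x
  have hd_le : ∀ x : Fin n → F, distTo C x ≤ k := by
    intro x
    obtain ⟨cv, hcv, hle⟩ := hclose x
    exact le_trans (Nat.sInf_le ⟨cv, hcv, rfl⟩) hle
  have hd_w : distTo C w = k := by
    refine le_antisymm (hd_le w) ?_
    obtain ⟨cv0, hcv0, -⟩ := hclose w
    refine le_csInf ⟨hammingDist w cv0, cv0, hcv0, rfl⟩ ?_
    rintro d ⟨cv, hcv, rfl⟩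
    exact w_far' α hα hr1 hrk hk3 hk1n hstarstar w hw cv hcv
  have hbdd : ∀ d ∈ Set.range (distTo C), d ≤ k := by
    rintro d ⟨x, rfl⟩; exact hd_le x
  have hcov : covRad C = k := by
    refine le_antisymm (csSup_le ⟨distTo C w, w, rfl⟩ hbdd) ?_
    rw [← hd_w]
    exact le_csSup ⟨k, hbdd⟩ ⟨w, rfl⟩
  exact ⟨hcov, hd_w.trans hcov.symm⟩
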